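/- Let u : 2^E → ℝ be an ordinally w-concave function on the subsets of a finite set E. For any X ⊆ E with X ∉ D*_u, letting X* be a maximizer of u minimizing |X Δ X*| over D*_u, there exist a positive integer k ≤ |E| and a sequence of distinct subsets Y_0 = X, Y_1, …, Y_k of E such that: (1) Y_i ∉ D*_u for each i ∈ {0,1,…,k−1}; (2) u(Y_0) < u(Y_1) < ⋯ < u(Y_k) and Y_k ∈ D*_u; (3) for each i ∈ {0,1,…,k−1}, Y_{i+1} = Y_i − y_i + x_i for some distinct y_i ∈ (Y_i \ X*) ∪ {∅} and x_i ∈ (X* \ Y_i) ∪ {∅}. -/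

import Mathlib

namespace OrdConc

variable {E : Type*} [DecidableEq E]

/-- Membership of an optional element in a finite set: the extra symbol `∅`
(encoded as `none`) always counts as a member of `S ∪ {∅}`. -/
def mem? (x : Option E) (S : Finset E) : Prop :=
  ∀ a : E, x = some a → a ∈ S

/-- `X − x` (no-op when `x = none`, i.e. the symbol `∅`). -/
def rem (X : Finset E) (x : Option E) : Finset E :=
  x.elim X fun a => X.erase a

/-- `X + x` (no-op when `x = none`, i.e. the symbol `∅`). -/
def add (X : Finset E) (x : Option E) : Finset E :=
  x.elim X fun a => insert a X

/-- `X − x + x'`. -/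
def move (X : Finset E) (x x' : Option E) : Finset E :=
  add (rem X x) x'

/-- Ordinal concavity (Definition 1). -/
def OrdinalConcave (u : Finset E → ℝ) : Prop :=
  ∀ X X' : Finset E, ∀ x ∈ X \ X', ∃ x' : Option E, mem? x' (X' \ X) ∧
    (u X < u (move X (some x) x') ∨
     u X' < u (move X' x' (some x)) ∨
     (u X = u (move X (some x) x') ∧ u X' = u (move X' x' (some x))))

/-- Ordinal weak-concavity (Definition 2). -/
def OrdinalWeakConcave (u : Finset E → ℝ) : Prop :=
  ∀ X X' : Finset E, X ≠ X' → ∃ x x' : Option E, x ≠ x' ∧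
    mem? x (X \ X') ∧ mem? x' (X' \ X) ∧
    (u X < u (move X x x') ∨
     u X' < u (move X' x' x) ∨
     (u X = u (move X x x') ∧ u X' = u (move X' x' x)))

/-- An M♮-convex set (family) of subsets of `E`. -/
def MnatConvex (F : Set (Finset E)) : Prop :=
  ∀ X ∈ F, ∀ X' ∈ F, ∀ x ∈ X \ X', ∃ x' : Option E, mem? x' (X' \ X) ∧
    move X (some x) x' ∈ F ∧ move X' x' (some x) ∈ F

/-- The simultaneous exchange property (†). -/
def Dagger (F : Set (Finset E)) : Prop :=
  ∀ X ∈ F, ∀ X' ∈ F, X ≠ X' → ∃ x x' : Option E, x ≠ x' ∧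
    mem? x (X \ X') ∧ mem? x' (X' \ X) ∧
    move X x x' ∈ F ∧ move X' x' x ∈ F

/-- `D*_u`, the family of global maximizers of `u`. -/
def Dstar (u : Finset E → ℝ) : Set (Finset E) :=
  {X | ∀ Z : Finset E, u Z ≤ u X}

/-- The neighborhood `N(X)`. -/
def Nbhd [Fintype E] (X : Finset E) : Set (Finset E) :=
  {Z | ∃ x x' : Option E, mem? x X ∧ mem? x' (Finset.univ \ X) ∧ Z = move X x x'}

/-- The interval `[X, Y]` in `2^E`. -/
def Interval (X Y : Finset E) : Set (Finset E) :=
  {Z | X ⊆ Z ∧ Z ⊆ Y}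

/-- `C_u(X,Y)`, the maximizers of `u` over the interval `[X,Y]`. -/
def CuI (u : Finset E → ℝ) (X Y : Finset E) : Set (Finset E) :=
  {Z | Z ∈ Interval X Y ∧ ∀ W ∈ Interval X Y, u W ≤ u Z}

/-- `C_u(X)`, the maximizers of `u` among all subsets of `X`. -/
def Cu (u : Finset E → ℝ) (X : Finset E) : Set (Finset E) :=
  {Z | Z ⊆ X ∧ ∀ W ⊆ X, u W ≤ u Z}

/-- Cardinality of the symmetric difference `X Δ Z`. -/
def sdCard (X Z : Finset E) : ℕ := (X \ Z ∪ Z \ X).card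

/-- The strict lexicographic order on `ℝ²`. -/
def lexLt (p q : ℝ × ℝ) : Prop := p.1 < q.1 ∨ (p.1 = q.1 ∧ p.2 < q.2)

/-- The (non-strict) lexicographic order on `ℝ²`. -/
def lexLe (p q : ℝ × ℝ) : Prop := lexLt p q ∨ p = q

/-- weight of an optional element -/
def wt (x : Option E) : ℕ := x.elim 0 fun _ => 1

lemma sdCard_comm (A B : Finset E) : sdCard A B = sdCard B A := by
  unfold sdCard; rw [Finset.union_comm]

lemma sdCard_eq_add (A B : Finset E) :
    sdCard A B = (A \ B).card + (B \ A).card :=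
  Finset.card_union_of_disjoint disjoint_sdiff_sdiff

lemma sdCard_eq_zero {A B : Finset E} (h : sdCard A B = 0) : A = B := by
  rw [sdCard_eq_add] at h
  have h1 : A \ B = ∅ := Finset.card_eq_zero.mp (by omega)
  have h2 : B \ A = ∅ := Finset.card_eq_zero.mp (by omega)
  exact Finset.Subset.antisymm (Finset.sdiff_eq_empty_iff_subset.mp h1)
    (Finset.sdiff_eq_empty_iff_subset.mp h2)

lemma sdCard_triangle (A B C : Finset E) :
    sdCard A C ≤ sdCard A B + sdCard B C := by
  have hsub : (A \ C ∪ C \ A) ⊆ (A \ B ∪ B \ A) ∪ (B \ C ∪ C \ B) := by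
    intro z hz
    simp only [Finset.mem_union, Finset.mem_sdiff] at hz ⊢
    by_cases hzB : z ∈ B <;> tauto
  calc (A \ C ∪ C \ A).card ≤ ((A \ B ∪ B \ A) ∪ (B \ C ∪ C \ B)).card :=
        Finset.card_le_card hsub
    _ ≤ sdCard A B + sdCard B C := Finset.card_union_le _ _

lemma sd_rem (A : Finset E) (y : Option E) : sdCard A (rem A y) ≤ wt y := by
  cases y with
  | none =>
    simp [sdCard, rem, wt]
  | some a =>
    have hsub : (A \ A.erase a ∪ A.erase a \ A) ⊆ {a} := by
      intro z hz
      simp only [Finset.mem_union, Finset.mem_sdiff, Finset.mem_erase,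
        Finset.mem_singleton] at hz ⊢
      tauto
    calc sdCard A (rem A (some a)) ≤ ({a} : Finset E).card :=
          Finset.card_le_card hsub
      _ ≤ wt (some a) := by simp [wt]

lemma sd_add (A : Finset E) (x : Option E) : sdCard A (add A x) ≤ wt x := by
  cases x with
  | none => simp [sdCard, add, wt]
  | some b =>
    have hsub : (A \ insert b A ∪ insert b A \ A) ⊆ {b} := by
      intro z hz
      simp only [Finset.mem_union, Finset.mem_sdiff, Finset.mem_insert,
        Finset.mem_singleton] at hz ⊢
      tauto
    calc sdCard A (add A (some b)) ≤ ({b} : Finset E).card :=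
          Finset.card_le_card hsub
      _ ≤ wt (some b) := by simp [wt]

lemma sd_self_move (A : Finset E) (y x : Option E) :
    sdCard A (move A y x) ≤ wt y + wt x := by
  calc sdCard A (move A y x)
      ≤ sdCard A (rem A y) + sdCard (rem A y) (add (rem A y) x) :=
        sdCard_triangle _ _ _
    _ ≤ wt y + wt x := Nat.add_le_add (sd_rem A y) (sd_add (rem A y) x)

lemma wt_pos {y x : Option E} (hne : y ≠ x) : 1 ≤ wt y + wt x := by
  cases y <;> cases x <;> simp [wt] at hne ⊢

/-- The exact decrease of the symmetric difference under a move towards `B`. -/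
lemma sd_move (A B : Finset E) (y x : Option E)
    (hy : mem? y (A \ B)) (hx : mem? x (B \ A)) (hne : y ≠ x) :
    sdCard (move A y x) B + (wt y + wt x) = sdCard A B := by
  cases y with
  | none =>
    cases x with
    | none => exact absurd rfl hne
    | some b =>
      have hb := hx b rfl
      rw [Finset.mem_sdiff] at hb
      have h1 : insert b A \ B = A \ B := by
        ext z
        simp only [Finset.mem_sdiff, Finset.mem_insert]
        constructor
        · rintro ⟨h | h, hz⟩
          · exact absurd (h ▸ hb.1) hz
          · exact ⟨h, hz⟩
        · tauto
      have h2 : B \ insert b A = (B \ A).erase b := Finset.sdiff_insert B A b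
      have h3 : ((B \ A).erase b).card + 1 = (B \ A).card :=
        Finset.card_erase_add_one (Finset.mem_sdiff.mpr hb)
      show sdCard (insert b A) B + (0 + 1) = sdCard A B
      rw [sdCard_eq_add, sdCard_eq_add, h1, h2]
      omega
  | some a =>
    have ha := hy a rfl
    rw [Finset.mem_sdiff] at ha
    cases x with
    | none =>
      have h1 : A.erase a \ B = (A \ B).erase a := Finset.erase_sdiff_comm A B a
      have h2 : B \ A.erase a = B \ A := by
        ext z
        by_cases hza : z = a
        · subst hza; simp [Finset.mem_sdiff, ha.2]
        · simp [Finset.mem_sdiff, Finset.mem_erase, hza]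
      have h3 : ((A \ B).erase a).card + 1 = (A \ B).card :=
        Finset.card_erase_add_one (Finset.mem_sdiff.mpr ha)
      show sdCard (A.erase a) B + (1 + 0) = sdCard A B
      rw [sdCard_eq_add, sdCard_eq_add, h1, h2]
      omega
    | some b =>
      have hb := hx b rfl
      rw [Finset.mem_sdiff] at hb
      have h1 : insert b (A.erase a) \ B = (A \ B).erase a := by
        ext z
        simp only [Finset.mem_sdiff, Finset.mem_insert, Finset.mem_erase]
        constructor
        · rintro ⟨h | ⟨hza, hz⟩, hzB⟩
          · exact absurd (h ▸ hb.1) hzB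
          · exact ⟨hza, hz, hzB⟩
        · rintro ⟨hza, hz, hzB⟩
          exact ⟨Or.inr ⟨hza, hz⟩, hzB⟩
      have h2 : B \ insert b (A.erase a) = (B \ A).erase b := by
        ext z
        simp only [Finset.mem_sdiff, Finset.mem_insert, Finset.mem_erase, not_or, not_and]
        constructor
        · rintro ⟨hzB, hzb, h⟩
          exact ⟨hzb, hzB, fun hzA => absurd (h (fun he => absurd (he ▸ hzB) ha.2)) (fun c => c hzA)⟩
        · rintro ⟨hzb, hzB, hzA⟩
          exact ⟨hzB, hzb, fun _ hzA' => absurd hzA' hzA⟩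
      have h3 : ((A \ B).erase a).card + 1 = (A \ B).card :=
        Finset.card_erase_add_one (Finset.mem_sdiff.mpr ha)
      have h4 : ((B \ A).erase b).card + 1 = (B \ A).card :=
        Finset.card_erase_add_one (Finset.mem_sdiff.mpr hb)
      show sdCard (insert b (A.erase a)) B + (1 + 1) = sdCard A B
      rw [sdCard_eq_add, sdCard_eq_add, h1, h2]
      omega

lemma mem_Dstar_of_eq {u : Finset E → ℝ} {Xs W : Finset E}
    (hXs : Xs ∈ Dstar u) (h : u W = u Xs) : W ∈ Dstar u :=
  fun Z => (hXs Z).trans h.symm.le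

/-- Main inductive construction of the increasing path. -/
lemma path_aux (u : Finset E → ℝ) (hu : OrdinalWeakConcave u)
    (Xs : Finset E) (hXs : Xs ∈ Dstar u) :
    ∀ n : ℕ, ∀ X : Finset E, X ∉ Dstar u → sdCard X Xs ≤ n →
    (∀ Z ∈ Dstar u, sdCard X Xs ≤ sdCard X Z) →
    ∃ k : ℕ, 0 < k ∧ k ≤ sdCard X Xs ∧ ∃ Y : ℕ → Finset E,
      Y 0 = X ∧
      (∀ i < k, Y i ∉ Dstar u) ∧
      (∀ i < k, u (Y i) < u (Y (i + 1))) ∧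
      Y k ∈ Dstar u ∧
      (∀ i < k, ∃ y x : Option E, y ≠ x ∧
        mem? y (Y i \ Xs) ∧ mem? x (Xs \ Y i) ∧
        Y (i + 1) = move (Y i) y x) := by
  intro n
  induction n with
  | zero =>
    intro X hX hle _
    exact absurd (sdCard_eq_zero (Nat.le_zero.mp hle) ▸ hXs) hX
  | succ n ih =>
    intro X hX hle hmin
    have hne : X ≠ Xs := fun h => hX (h ▸ hXs)
    obtain ⟨y, x, hyx, hy, hx, hcase⟩ := hu X Xs hne
    have hsd := sd_move X Xs y x hy hx hyx
    have hwt := wt_pos hyx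
    rcases hcase with hlt | hlt2 | ⟨heq1, heq2⟩
    · -- u X < u (move X y x)
      set Y1 := move X y x with hY1
      have hminY1 : ∀ Z ∈ Dstar u, sdCard Y1 Xs ≤ sdCard Y1 Z := by
        intro Z hZ
        have h1 : sdCard X Z ≤ sdCard X Y1 + sdCard Y1 Z := sdCard_triangle _ _ _
        have h2 : sdCard X Y1 ≤ wt y + wt x := sd_self_move X y x
        have h3 := hmin Z hZ
        omega
      by_cases hY1D : Y1 ∈ Dstar u
      · refine ⟨1, Nat.one_pos, by omega, fun i => if i = 0 then X else Y1, rfl, ?_, ?_, ?_, ?_⟩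
        · intro i hi
          interval_cases i
          simpa using hX
        · intro i hi
          interval_cases i
          simpa using hlt
        · simpa using hY1D
        · intro i hi
          interval_cases i
          exact ⟨y, x, hyx, by simpa using hy, by simpa using hx, by simp [hY1]⟩
      · obtain ⟨k, hk0, hkle, Y', hY'0, hY'nD, hY'inc, hY'D, hY'mv⟩ :=
          ih Y1 hY1D (by omega) hminY1
        refine ⟨k + 1, Nat.succ_pos _, by omega,
          fun i => if i = 0 then X else Y' (i - 1), rfl, ?_, ?_, ?_, ?_⟩
        · intro i hi
          match i with
          | 0 => simpa using hX
          | j + 1 =>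
            have : j < k := by omega
            simpa using hY'nD j this
        · intro i hi
          match i with
          | 0 => simpa [hY'0] using hlt
          | j + 1 =>
            have : j < k := by omega
            simpa using hY'inc j this
        · have : k + 1 ≠ 0 := by omega
          simpa [this] using hY'D
        · intro i hi
          match i with
          | 0 => exact ⟨y, x, hyx, by simpa [hY'0] using hy, by simpa [hY'0] using hx,
              by simp [hY'0, hY1]⟩
          | j + 1 =>
            have : j < k := by omega
            simpa using hY'mv j this
    · exact absurd (hXs (move Xs x y)) (not_le.mpr hlt2)
    · -- case (iii): contradiction with minimality
      exfalso
      have hZD : move Xs x y ∈ Dstar u := mem_Dstar_of_eq hXs heq2.symm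
      have hsd2 := sd_move Xs X x y hx hy (Ne.symm hyx)
      have := hmin _ hZD
      rw [sdCard_comm (move Xs x y) X, sdCard_comm Xs X] at hsd2
      omega

lemma chain_lt {u : Finset E → ℝ} {Y : ℕ → Finset E} {k : ℕ}
    (h : ∀ i < k, u (Y i) < u (Y (i + 1))) :
    ∀ j ≤ k, ∀ i < j, u (Y i) < u (Y j) := by
  intro j
  induction j with
  | zero => intro _ i hi; omega
  | succ j ihj =>
    intro hjk i hij
    have hj : j < k := by omega
    rcases Nat.lt_or_ge i j with h' | h'
    · exact (ihj (by omega) i h').trans (h j hj)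
    · have : i = j := by omega
      exact this ▸ h j hj

theorem exists_increasing_path_to_maximizer
    {E : Type*} [DecidableEq E] [Fintype E]
    (u : Finset E → ℝ) (hu : OrdinalWeakConcave u)
    (X Xs : Finset E) (hX : X ∉ Dstar u) (hXs : Xs ∈ Dstar u)
    (hmin : ∀ Z ∈ Dstar u, sdCard X Xs ≤ sdCard X Z) :
    ∃ k : ℕ, 0 < k ∧ k ≤ Fintype.card E ∧ ∃ Y : ℕ → Finset E,
      Y 0 = X ∧
      (∀ i ≤ k, ∀ j ≤ k, i ≠ j → Y i ≠ Y j) ∧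
      (∀ i < k, Y i ∉ Dstar u) ∧
      (∀ i < k, u (Y i) < u (Y (i + 1))) ∧
      Y k ∈ Dstar u ∧
      (∀ i < k, ∃ y x : Option E, y ≠ x ∧
        mem? y (Y i \ Xs) ∧ mem? x (Xs \ Y i) ∧
        Y (i + 1) = move (Y i) y x) := by
  obtain ⟨k, hk0, hkle, Y, hY0, hnD, hinc, hD, hmv⟩ :=
    path_aux u hu Xs hXs (sdCard X Xs) X hX le_rfl hmin
  have hcard : sdCard X Xs ≤ Fintype.card E := by
    calc sdCard X Xs = (X \ Xs ∪ Xs \ X).card := rfl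
      _ ≤ (Finset.univ : Finset E).card := Finset.card_le_univ _
      _ = Fintype.card E := Finset.card_univ
  have hmono := chain_lt hinc
  refine ⟨k, hk0, le_trans hkle hcard, Y, hY0, ?_, hnD, hinc, hD, hmv⟩
  intro i hi j hj hij
  rcases lt_trichotomy i j with h | h | h
  · exact fun he => absurd (he ▸ hmono j hj i h) (lt_irrefl _)
  · exact absurd h hij
  · exact fun he => absurd (he ▸ hmono i hi j h) (lt_irrefl _)
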